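/- Let n ≥ 1 and for each i let α_i ≥ 1, γ_i ≥ 1, β_i > 0 with α_j + β_j ≥ 2 for some j. Define θ = ∏_{i=1}^n [Γ(β_i)/Γ(α_i + β_i)]^{γ_i} and the normalized multi-index Le Roy function 𝔽(z) = z + ∑_{k=1}^∞ (∏_{i=1}^n [Γ(β_i)]^{γ_i} / ∏_{i=1}^n [Γ(α_i k + β_i)]^{γ_i}) z^{k+1}. Then for all real z > 0, 𝔽(z) ≤ z + z·θ·(e^z − 1). -/

import Mathlib

open Real Finset Nat

private lemma gamma_key (n : ℕ) (α β γ : Fin n → ℝ)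
    (hα : ∀ i, 1 ≤ α i) (hγ : ∀ i, 1 ≤ γ i) (hβ : ∀ i, 0 < β i)
    (hj : ∃ j, 2 ≤ α j + β j) (k : ℕ) :
    ((k + 1) ! : ℝ) * ∏ i, (Real.Gamma (α i + β i)) ^ γ i ≤
      ∏ i, (Real.Gamma (α i * (k + 1 : ℕ) + β i)) ^ γ i := by
  have hpos : ∀ (i : Fin n) (x : ℝ), 0 < x → 0 < Real.Gamma x := fun i x hx =>
    Real.Gamma_pos_of_pos hx
  induction k with
  | zero =>
    have h1 : (((0 + 1) ! : ℕ) : ℝ) = 1 := by norm_num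
    rw [h1, one_mul]
    apply le_of_eq
    apply Finset.prod_congr rfl
    intro i _
    norm_num
  | succ k ih =>
    obtain ⟨j, hjj⟩ := hj
    -- argument bounds
    have hai : ∀ i : Fin n, (k : ℝ) + 2 ≤ α i * (k + 1 : ℕ) + β i ∨ True := fun i => Or.inr trivial
    have harg : ∀ i : Fin n, (1 : ℝ) ≤ α i * (k + 1 : ℕ) + β i := by
      intro i
      have h1 : (1 : ℝ) ≤ α i * (k + 1 : ℕ) := by
        have : (1 : ℝ) ≤ ((k : ℝ) + 1) := by linarith [Nat.cast_nonneg (α := ℝ) k]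
        calc (1:ℝ) ≤ 1 * ((k:ℝ)+1) := by linarith
        _ ≤ α i * ((k:ℝ)+1) := by
            apply mul_le_mul_of_nonneg_right (hα i); linarith
        _ = α i * (k + 1 : ℕ) := by push_cast; ring
      linarith [hβ i]
    -- step per coordinate
    have hstep : ∀ i : Fin n,
        (α i * (k + 1 : ℕ) + β i) ^ γ i * (Real.Gamma (α i * (k + 1 : ℕ) + β i)) ^ γ i ≤
          (Real.Gamma (α i * (k + 2 : ℕ) + β i)) ^ γ i := by
      intro i
      set x := α i * (k + 1 : ℕ) + β i with hxdef
      have hx1 : (1 : ℝ) ≤ x := harg i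
      have hx0 : (0 : ℝ) < x := by linarith
      have h2 : (2 : ℝ) ≤ x + 1 := by linarith
      have hle : x + 1 ≤ α i * (k + 2 : ℕ) + β i := by
        have : α i * (k + 2 : ℕ) = α i * (k + 1 : ℕ) + α i := by push_cast; ring
        rw [this]; have := hα i; simp only [hxdef]; linarith
      have hmono : Real.Gamma (x + 1) ≤ Real.Gamma (α i * (k + 2 : ℕ) + β i) :=
        Real.Gamma_strictMonoOn_Ici.monotoneOn (by exact h2) (by exact le_trans h2 hle) hle
      have heq : Real.Gamma (x + 1) = x * Real.Gamma x := Real.Gamma_add_one (ne_of_gt hx0)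
      have hGx : 0 < Real.Gamma x := Real.Gamma_pos_of_pos hx0
      calc x ^ γ i * (Real.Gamma x) ^ γ i = (x * Real.Gamma x) ^ γ i := by
            rw [Real.mul_rpow hx0.le hGx.le]
        _ = (Real.Gamma (x + 1)) ^ γ i := by rw [heq]
        _ ≤ (Real.Gamma (α i * (k + 2 : ℕ) + β i)) ^ γ i := by
            apply Real.rpow_le_rpow (Real.Gamma_pos_of_pos (by linarith)).le hmono
            linarith [hγ i]
    -- product of bases ≥ k+2
    have hbase : ((k : ℝ) + 2) ≤ ∏ i, (α i * (k + 1 : ℕ) + β i) ^ γ i := by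
      have hone : ∀ i ∈ Finset.univ (α := Fin n), (1 : ℝ) ≤ (α i * (k + 1 : ℕ) + β i) ^ γ i := by
        intro i _
        exact Real.one_le_rpow (harg i) (by linarith [hγ i])
      have hjle : ((k : ℝ) + 2) ≤ (α j * (k + 1 : ℕ) + β j) ^ γ j := by
        have hb : ((k : ℝ) + 2) ≤ α j * (k + 1 : ℕ) + β j := by
          have h1 : (k : ℝ) ≤ α j * (k : ℝ) := by
            nlinarith [hα j, Nat.cast_nonneg (α := ℝ) k]
          have : α j * (k + 1 : ℕ) + β j = α j * (k : ℝ) + (α j + β j) := by push_cast; ring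
          rw [this]; linarith
        calc ((k : ℝ) + 2) ≤ α j * (k + 1 : ℕ) + β j := hb
          _ = (α j * (k + 1 : ℕ) + β j) ^ (1 : ℝ) := (Real.rpow_one _).symm
          _ ≤ (α j * (k + 1 : ℕ) + β j) ^ γ j :=
              Real.rpow_le_rpow_of_exponent_le (harg j) (hγ j)
      refine le_trans hjle ?_
      have h := Finset.prod_le_prod (s := Finset.univ)
        (f := fun i : Fin n => if i = j then (α j * ((k + 1 : ℕ) : ℝ) + β j) ^ γ j else 1)
        (g := fun i : Fin n => (α i * ((k + 1 : ℕ) : ℝ) + β i) ^ γ i)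
        (fun i _ => by
          split
          · exact (Real.rpow_pos_of_pos (by linarith [harg j]) _).le
          · exact zero_le_one)
        (fun i _ => by
          by_cases hij : i = j
          · subst hij; simp
          · simp only [hij, if_false]; exact hone i (Finset.mem_univ i))
      rw [Finset.prod_ite_eq' Finset.univ j
        (fun _ => (α j * ((k + 1 : ℕ) : ℝ) + β j) ^ γ j)] at h
      simpa using h
    -- combine
    have hGpos : 0 < ∏ i, (Real.Gamma (α i * (k + 1 : ℕ) + β i)) ^ γ i := by
      apply Finset.prod_pos; intro i _
      exact Real.rpow_pos_of_pos (Real.Gamma_pos_of_pos (by linarith [harg i])) _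
    have hPab : 0 < ∏ i, (Real.Gamma (α i + β i)) ^ γ i := by
      apply Finset.prod_pos; intro i _
      exact Real.rpow_pos_of_pos (Real.Gamma_pos_of_pos (by linarith [hα i, hβ i])) _
    calc ((k + 2) ! : ℝ) * ∏ i, (Real.Gamma (α i + β i)) ^ γ i
        = ((k : ℝ) + 2) * (((k + 1) ! : ℝ) * ∏ i, (Real.Gamma (α i + β i)) ^ γ i) := by
          rw [Nat.factorial_succ]; push_cast; ring
      _ ≤ ((k : ℝ) + 2) * ∏ i, (Real.Gamma (α i * (k + 1 : ℕ) + β i)) ^ γ i := by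
          apply mul_le_mul_of_nonneg_left ih (by positivity)
      _ ≤ (∏ i, (α i * (k + 1 : ℕ) + β i) ^ γ i) *
            ∏ i, (Real.Gamma (α i * (k + 1 : ℕ) + β i)) ^ γ i := by
          apply mul_le_mul_of_nonneg_right hbase hGpos.le
      _ = ∏ i, (α i * (k + 1 : ℕ) + β i) ^ γ i *
            (Real.Gamma (α i * (k + 1 : ℕ) + β i)) ^ γ i := by
          rw [← Finset.prod_mul_distrib]
      _ ≤ ∏ i, (Real.Gamma (α i * (k + 2 : ℕ) + β i)) ^ γ i := by
          apply Finset.prod_le_prod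
          · intro i _
            have := harg i
            positivity
          · intro i _; exact hstep i

theorem multi_leroy_exp_bound (n : ℕ) (hn : 1 ≤ n)
    (α β γ : Fin n → ℝ)
    (hα : ∀ i, 1 ≤ α i) (hγ : ∀ i, 1 ≤ γ i) (hβ : ∀ i, 0 < β i)
    (hj : ∃ j, 2 ≤ α j + β j) :
    ∀ z : ℝ, 0 < z →
      z + ∑' k : ℕ,
          ((∏ i, (Real.Gamma (β i)) ^ γ i) /
            ∏ i, (Real.Gamma (α i * (k + 1 : ℕ) + β i)) ^ γ i) * z ^ (k + 2) ≤
        z + z * (∏ i, (Real.Gamma (β i) / Real.Gamma (α i + β i)) ^ γ i)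
          * (Real.exp z - 1) := by
  intro z hz
  set Pβ : ℝ := ∏ i, (Real.Gamma (β i)) ^ γ i with hPβ
  set Pab : ℝ := ∏ i, (Real.Gamma (α i + β i)) ^ γ i with hPab
  have hPβ0 : 0 < Pβ := Finset.prod_pos fun i _ =>
    Real.rpow_pos_of_pos (Real.Gamma_pos_of_pos (hβ i)) _
  have hPab0 : 0 < Pab := Finset.prod_pos fun i _ =>
    Real.rpow_pos_of_pos (Real.Gamma_pos_of_pos (by linarith [hα i, hβ i])) _
  have hθ : (∏ i, (Real.Gamma (β i) / Real.Gamma (α i + β i)) ^ γ i) = Pβ / Pab := by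
    rw [hPβ, hPab, ← Finset.prod_div_distrib]
    apply Finset.prod_congr rfl
    intro i _
    rw [Real.div_rpow (Real.Gamma_pos_of_pos (hβ i)).le
      (Real.Gamma_pos_of_pos (by linarith [hα i, hβ i])).le]
  -- termwise bound
  have hterm : ∀ k : ℕ,
      (Pβ / ∏ i, (Real.Gamma (α i * (k + 1 : ℕ) + β i)) ^ γ i) * z ^ (k + 2) ≤
        (Pβ / Pab) / ((k + 1) ! : ℝ) * z ^ (k + 2) := by
    intro k
    have hQ := gamma_key n α β γ hα hγ hβ hj k
    have hfac : (0 : ℝ) < ((k + 1) ! : ℝ) := by positivity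
    have hQ0 : (0 : ℝ) < ((k + 1) ! : ℝ) * Pab := by positivity
    apply mul_le_mul_of_nonneg_right _ (by positivity)
    rw [div_div]
    have hQ' : Pab * ((k + 1) ! : ℝ) ≤ ∏ i, (Real.Gamma (α i * (k + 1 : ℕ) + β i)) ^ γ i := by
      rw [hPab, mul_comm]; exact hQ
    exact div_le_div_of_nonneg_left hPβ0.le (mul_pos hPab0 hfac) hQ'
  -- RHS as a tsum
  have hexp : Real.exp z - 1 = ∑' k : ℕ, z ^ (k + 1) / ((k + 1) ! : ℝ) := by
    have hsum := Real.summable_pow_div_factorial z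
    have hexpz : Real.exp z = ∑' k : ℕ, z ^ k / (k ! : ℝ) := by
      rw [Real.exp_eq_exp_ℝ, NormedSpace.exp_eq_tsum_div]
    rw [hexpz, Summable.tsum_eq_zero_add hsum]
    simp
  have hsum1 : Summable (fun k : ℕ => z ^ (k + 1) / ((k + 1) ! : ℝ)) :=
    ((summable_nat_add_iff 1).mpr (Real.summable_pow_div_factorial z))
  have hRHS : z * (Pβ / Pab) * (Real.exp z - 1) =
      ∑' k : ℕ, (Pβ / Pab) / ((k + 1) ! : ℝ) * z ^ (k + 2) := by
    rw [hexp, ← tsum_mul_left]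
    apply tsum_congr
    intro k
    field_simp
    ring
  have hsum2 : Summable (fun k : ℕ => (Pβ / Pab) / ((k + 1) ! : ℝ) * z ^ (k + 2)) := by
    have := hsum1.mul_left (z * (Pβ / Pab))
    apply this.congr
    intro k
    field_simp
    ring
  have hnonneg : ∀ k : ℕ,
      0 ≤ (Pβ / ∏ i, (Real.Gamma (α i * (k + 1 : ℕ) + β i)) ^ γ i) * z ^ (k + 2) := by
    intro k
    have hQ0 : 0 < ∏ i, (Real.Gamma (α i * (k + 1 : ℕ) + β i)) ^ γ i := by
      apply Finset.prod_pos; intro i _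
      have h1 : (0 : ℝ) < α i * (k + 1 : ℕ) + β i := by
        have h2 : (0:ℝ) ≤ α i * ((k : ℝ) + 1) := by
          nlinarith [hα i, Nat.cast_nonneg (α := ℝ) k]
        have h3 : ((k + 1 : ℕ) : ℝ) = (k : ℝ) + 1 := by push_cast; ring
        rw [h3]; linarith [hβ i]
      exact Real.rpow_pos_of_pos (Real.Gamma_pos_of_pos h1) _
    exact mul_nonneg (div_nonneg hPβ0.le hQ0.le) (pow_nonneg hz.le _)
  have hsumL : Summable (fun k : ℕ =>
      (Pβ / ∏ i, (Real.Gamma (α i * (k + 1 : ℕ) + β i)) ^ γ i) * z ^ (k + 2)) :=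
    Summable.of_nonneg_of_le hnonneg hterm hsum2
  rw [hθ, hRHS]
  exact add_le_add_right (Summable.tsum_le_tsum hterm hsumL hsum2) z
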